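/- Let L be a feasible set of links (a_L(v) ≤ 1 for all ℓ_v ∈ L) and K ≥ 1. Then there exists a subset L' ⊆ L with |L'| ≥ c·|L|/K for an absolute constant c > 0 such that L' is K-bi-feasible: a_{L'}(v) ≤ 1/K and a_v(L') ≤ 2/K for every ℓ_v ∈ L'. -/
import Mathlib

set_option maxHeartbeats 1000000

open Finset

/-- Splitting a monochromatic double sum at a distinguished vertex `v`. -/
lemma color_split_aux {α : Type*} [Fintype α] [DecidableEq α] {m : ℕ}
    (b : α → α → ℝ) (hb : ∀ x, b x x = 0) (c : α → Fin m) (v : α) :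
    (∑ v' : α, ∑ w : α, if c w = c v' then b w v' else 0)
      = (∑ v' ∈ Finset.univ.erase v, ∑ w ∈ Finset.univ.erase v,
            if c w = c v' then b w v' else 0)
        + ∑ w ∈ Finset.univ.erase v, (if c w = c v then b w v + b v w else 0) := by
  have hsplit : ∀ f : α → ℝ, ∑ x : α, f x = (∑ x ∈ Finset.univ.erase v, f x) + f v := by
    intro f
    exact (Finset.sum_erase_add _ _ (Finset.mem_univ v)).symm
  rw [hsplit (fun v' => ∑ w : α, if c w = c v' then b w v' else 0)]
  rw [hsplit (fun w => if c w = c v then b w v else 0)]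
  have h1 : ∀ v' ∈ Finset.univ.erase v,
      (∑ w : α, if c w = c v' then b w v' else 0)
        = (∑ w ∈ Finset.univ.erase v, if c w = c v' then b w v' else 0)
          + (if c v = c v' then b v v' else 0) := by
    intro v' _
    rw [hsplit (fun w => if c w = c v' then b w v' else 0)]
  rw [Finset.sum_congr rfl h1, Finset.sum_add_distrib]
  have h2 : (if c v = c v then b v v else 0) = 0 := by simp [hb]
  rw [h2, add_zero]
  have h3 : (∑ w ∈ Finset.univ.erase v, if c w = c v then b w v + b v w else 0)
      = (∑ w ∈ Finset.univ.erase v, if c w = c v then b w v else 0)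
        + ∑ w ∈ Finset.univ.erase v, (if c v = c w then b v w else 0) := by
    rw [← Finset.sum_add_distrib]
    refine Finset.sum_congr rfl fun w _ => ?_
    rcases eq_or_ne (c w) (c v) with h | h
    · simp [h]
    · simp [h, h.symm]
  rw [h3]
  ring

/-- Signal-strengthening lemma (Fanghänel–Kesselheim–Räcke–Vöcking): every
feasible set `L` contains a `K`-bi-feasible subset of size `Ω(|L|/K)`, with an
absolute constant `c > 0`. -/
theorem signal_strengthening :
    ∃ c : ℝ, 0 < c ∧
      ∀ (ι : Type) (a : ι → ι → ℝ),
        (∀ w v, 0 ≤ a w v) → (∀ w v, a w v ≤ 1) → (∀ v, a v v = 0) →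
        ∀ (L : Finset ι) (K : ℝ), 1 ≤ K →
          (∀ v ∈ L, ∑ w ∈ L, a w v ≤ 1) →
          ∃ L' ⊆ L, c * L.card / K ≤ (L'.card : ℝ) ∧
            (∀ v ∈ L', ∑ w ∈ L', a w v ≤ 1 / K) ∧
            (∀ v ∈ L', ∑ w ∈ L', a v w ≤ 2 / K) := by
  classical
  refine ⟨1/8, by norm_num, ?_⟩
  intro ι a ha0 _ha1 hdiag L K hK hfeas
  have hK0 : (0:ℝ) < K := lt_of_lt_of_le one_pos hK
  -- Step 1: restrict to links with bounded out-affectance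
  set L₁ : Finset ι := L.filter (fun v => ∑ w ∈ L, a v w ≤ 2) with hL₁def
  have hL₁sub : L₁ ⊆ L := Finset.filter_subset _ _
  have hmarkov : (L.card : ℝ) ≤ 2 * L₁.card := by
    have htot : ∑ v ∈ L, ∑ w ∈ L, a v w ≤ (L.card : ℝ) := by
      rw [Finset.sum_comm]
      calc ∑ w ∈ L, ∑ v ∈ L, a v w ≤ ∑ _w ∈ L, (1:ℝ) :=
            Finset.sum_le_sum fun w hw => hfeas w hw
        _ = L.card := by simp
    have hB : ∀ v ∈ L \ L₁, (2:ℝ) < ∑ w ∈ L, a v w := by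
      intro v hv
      rcases Finset.mem_sdiff.1 hv with ⟨hvL, hvn⟩
      by_contra hle
      exact hvn (Finset.mem_filter.2 ⟨hvL, le_of_not_gt hle⟩)
    have h1 : (2:ℝ) * (L \ L₁).card ≤ ∑ v ∈ L \ L₁, ∑ w ∈ L, a v w := by
      calc (2:ℝ) * (L \ L₁).card = ∑ _v ∈ L \ L₁, (2:ℝ) := by
            rw [Finset.sum_const, nsmul_eq_mul]; ring
        _ ≤ ∑ v ∈ L \ L₁, ∑ w ∈ L, a v w :=
            Finset.sum_le_sum fun v hv => (hB v hv).le
    have h2 : ∑ v ∈ L \ L₁, ∑ w ∈ L, a v w ≤ ∑ v ∈ L, ∑ w ∈ L, a v w := by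
      refine Finset.sum_le_sum_of_subset_of_nonneg (Finset.sdiff_subset) ?_
      intro v _ _
      exact Finset.sum_nonneg fun w _ => ha0 v w
    have hcard : ((L \ L₁).card : ℝ) = (L.card : ℝ) - L₁.card := by
      rw [Finset.card_sdiff_of_subset hL₁sub, Nat.cast_sub (Finset.card_le_card hL₁sub)]
    linarith
  -- Step 2: number of colors
  set m : ℕ := ⌈3 * K⌉₊ with hmdef
  have hm3 : 3 * K ≤ (m : ℝ) := Nat.le_ceil _
  have hm0 : 0 < m := by
    have h : (0:ℝ) < m := by linarith
    exact_mod_cast h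
  have hm4 : (m : ℝ) ≤ 4 * K := by
    have h := Nat.ceil_lt_add_one (by positivity : (0:ℝ) ≤ 3 * K)
    have h' : (m : ℝ) < 3 * K + 1 := h
    linarith
  -- Step 3: minimize total monochromatic affectance over colorings of L₁
  obtain ⟨c, -, hcmin⟩ := Finset.exists_min_image
    (Finset.univ : Finset ({x // x ∈ L₁} → Fin m))
    (fun c => ∑ v : {x // x ∈ L₁}, ∑ w : {x // x ∈ L₁},
        if c w = c v then a (↑w) (↑v) else 0)
    ⟨fun _ => ⟨0, hm0⟩, Finset.mem_univ _⟩
  -- Step 4: local optimality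
  have hopt : ∀ (v : {x // x ∈ L₁}) (k : Fin m),
      (∑ w ∈ Finset.univ.erase v, if c w = c v then a (↑w) (↑v) + a (↑v) (↑w) else 0)
        ≤ ∑ w ∈ Finset.univ.erase v, if c w = k then a (↑w) (↑v) + a (↑v) (↑w) else 0 := by
    intro v k
    have key := hcmin (Function.update c v k) (Finset.mem_univ _)
    rw [color_split_aux (α := {x // x ∈ L₁}) (m := m) (fun w v' => a (↑w) (↑v')) (fun x => hdiag ↑x) c v,
        color_split_aux (α := {x // x ∈ L₁}) (m := m) (fun w v' => a (↑w) (↑v')) (fun x => hdiag ↑x)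
          (Function.update c v k) v] at key
    have hS : (∑ v' ∈ Finset.univ.erase v, ∑ w ∈ Finset.univ.erase v,
          if Function.update c v k w = Function.update c v k v' then a (↑w) (↑v') else 0)
        = ∑ v' ∈ Finset.univ.erase v, ∑ w ∈ Finset.univ.erase v,
          if c w = c v' then a (↑w) (↑v') else 0 := by
      refine Finset.sum_congr rfl fun v' hv' => Finset.sum_congr rfl fun w hw => ?_
      rw [Function.update_of_ne (Finset.mem_erase.1 hw).1,
          Function.update_of_ne (Finset.mem_erase.1 hv').1]
    have hD : (∑ w ∈ Finset.univ.erase v,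
          if Function.update c v k w = Function.update c v k v
            then a (↑w) (↑v) + a (↑v) (↑w) else 0)
        = ∑ w ∈ Finset.univ.erase v,
            if c w = k then a (↑w) (↑v) + a (↑v) (↑w) else 0 := by
      refine Finset.sum_congr rfl fun w hw => ?_
      rw [Function.update_of_ne (Finset.mem_erase.1 hw).1, Function.update_self]
    rw [hS, hD] at key
    linarith
  -- Step 5: per-vertex bound for the minimizing coloring
  have hbound : ∀ v : {x // x ∈ L₁},
      K * (∑ w ∈ Finset.univ.erase v,
        if c w = c v then a (↑w) (↑v) + a (↑v) (↑w) else 0) ≤ 1 := by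
    intro v
    set D : Fin m → ℝ := fun k => ∑ w ∈ Finset.univ.erase v,
        if c w = k then a (↑w) (↑v) + a (↑v) (↑w) else 0 with hDdef
    have hDsum : ∑ k : Fin m, D k
        = ∑ w ∈ Finset.univ.erase v, (a (↑w) (↑v) + a (↑v) (↑w)) := by
      rw [hDdef, Finset.sum_comm]
      refine Finset.sum_congr rfl fun w _ => ?_
      simp
    have hD0 : 0 ≤ D (c v) := by
      refine Finset.sum_nonneg fun w _ => ?_
      split
      · have h1 := ha0 (↑w) (↑v); have h2 := ha0 (↑v) (↑w); linarith
      · exact le_refl 0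
    have h3 : ∑ w ∈ Finset.univ.erase v, (a (↑w) (↑v) + a (↑v) (↑w)) ≤ 3 := by
      have hsub : ∑ w ∈ Finset.univ.erase v, (a (↑w) (↑v) + a (↑v) (↑w))
          ≤ ∑ w : {x // x ∈ L₁}, (a (↑w) (↑v) + a (↑v) (↑w)) := by
        refine Finset.sum_le_sum_of_subset_of_nonneg (Finset.erase_subset _ _) ?_
        intro w _ _
        have h1 := ha0 (↑w) (↑v); have h2 := ha0 (↑v) (↑w); linarith
      have hcoe : ∑ w : {x // x ∈ L₁}, (a (↑w) (↑v) + a (↑v) (↑w))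
          = ∑ w ∈ L₁, (a w (↑v) + a (↑v) w) :=
        Finset.sum_coe_sort L₁ (fun w => a w (↑v) + a (↑v) w)
      have hin : ∑ w ∈ L₁, a w (↑v) ≤ 1 :=
        le_trans (Finset.sum_le_sum_of_subset_of_nonneg hL₁sub
          (fun w _ _ => ha0 w ↑v)) (hfeas ↑v (hL₁sub v.2))
      have hout : ∑ w ∈ L₁, a (↑v) w ≤ 2 := by
        refine le_trans (Finset.sum_le_sum_of_subset_of_nonneg hL₁sub
          (fun w _ _ => ha0 (↑v) w)) ?_
        exact (Finset.mem_filter.1 v.2).2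
      have hsplit2 : ∑ w ∈ L₁, (a w (↑v) + a (↑v) w)
          = (∑ w ∈ L₁, a w (↑v)) + ∑ w ∈ L₁, a (↑v) w := Finset.sum_add_distrib
      calc ∑ w ∈ Finset.univ.erase v, (a (↑w) (↑v) + a (↑v) (↑w))
          ≤ ∑ w : {x // x ∈ L₁}, (a (↑w) (↑v) + a (↑v) (↑w)) := hsub
        _ = ∑ w ∈ L₁, (a w (↑v) + a (↑v) w) := hcoe
        _ = (∑ w ∈ L₁, a w (↑v)) + ∑ w ∈ L₁, a (↑v) w := hsplit2
        _ ≤ 3 := by linarith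
    have hmD : (m : ℝ) * D (c v) ≤ 3 := by
      have hconst : (m : ℝ) * D (c v) = ∑ _k : Fin m, D (c v) := by
        rw [Finset.sum_const, Finset.card_univ, Fintype.card_fin, nsmul_eq_mul]
      rw [hconst]
      calc ∑ _k : Fin m, D (c v) ≤ ∑ k : Fin m, D k :=
            Finset.sum_le_sum fun k _ => hopt v k
        _ ≤ 3 := hDsum ▸ h3
    nlinarith [hm3, hD0]
  -- Step 6: pick the largest color class
  set Cl : Fin m → Finset {x // x ∈ L₁} :=
    fun j => Finset.univ.filter (fun v => c v = j) with hCldef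
  have hcards : ∑ j : Fin m, (Cl j).card = L₁.card := by
    have h := Finset.card_eq_sum_card_fiberwise
      (s := (Finset.univ : Finset {x // x ∈ L₁}))
      (t := (Finset.univ : Finset (Fin m))) (f := c)
      (fun x _ => Finset.mem_univ _)
    rw [Finset.card_univ, Fintype.card_coe] at h
    exact h.symm
  obtain ⟨j, hj⟩ : ∃ j : Fin m, L₁.card ≤ m * (Cl j).card := by
    by_contra hcon
    push_neg at hcon
    have h1 : ∑ j : Fin m, m * (Cl j).card < ∑ _j : Fin m, L₁.card :=
      Finset.sum_lt_sum_of_nonempty ⟨⟨0, hm0⟩, Finset.mem_univ _⟩ fun j _ => hcon j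
    rw [← Finset.mul_sum, hcards] at h1
    simp only [Finset.sum_const, Finset.card_univ, Fintype.card_fin, smul_eq_mul] at h1
    omega
  have hclass : ∀ v ∈ Cl j,
      (∑ w ∈ Finset.univ.erase v, if c w = j then a (↑w) (↑v) + a (↑v) (↑w) else 0)
        ≤ 1 / K := by
    intro v hv
    have hcv : c v = j := by
      have := (Finset.mem_filter.1 hv).2
      exact this
    have hb := hbound v
    rw [hcv] at hb
    rw [le_div_iff₀ hK0]
    linarith
  -- erase-filter description of the class minus a vertex
  have herase : ∀ v ∈ Cl j, ∀ g : {x // x ∈ L₁} → ℝ,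
      ∑ w ∈ (Cl j).erase v, g w
        = ∑ w ∈ Finset.univ.erase v, if c w = j then g w else 0 := by
    intro v _ g
    have hset : (Cl j).erase v = (Finset.univ.erase v).filter (fun w => c w = j) := by
      ext w
      simp [hCldef, Finset.mem_erase, Finset.mem_filter, and_comm]
    rw [hset, Finset.sum_filter]
  refine ⟨(Cl j).image Subtype.val, ?_, ?_, ?_, ?_⟩
  · intro x hx
    rcases Finset.mem_image.1 hx with ⟨v, _, rfl⟩
    exact hL₁sub v.2
  · -- cardinality bound
    have hcardim : ((Cl j).image Subtype.val).card = (Cl j).card :=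
      Finset.card_image_of_injective _ Subtype.val_injective
    rw [hcardim, div_le_iff₀ hK0]
    have hjR : (L₁.card : ℝ) ≤ (m : ℝ) * (Cl j).card := by exact_mod_cast hj
    have hCl0 : (0:ℝ) ≤ (Cl j).card := Nat.cast_nonneg _
    nlinarith [hmarkov, hjR, hm4, hK0]
  · -- in-affectance bound
    intro x hx
    rcases Finset.mem_image.1 hx with ⟨v, hv, rfl⟩
    have hsum : ∑ w ∈ (Cl j).image Subtype.val, a w (↑v)
        = ∑ w ∈ Cl j, a (↑w) (↑v) :=
      Finset.sum_image fun x _ y _ h => Subtype.val_injective h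
    rw [hsum]
    have h1 : ∑ w ∈ Cl j, a (↑w) (↑v) = a (↑v) (↑v) + ∑ w ∈ (Cl j).erase v, a (↑w) (↑v) :=
      (Finset.add_sum_erase _ _ hv).symm
    rw [h1, hdiag, zero_add, herase v hv (fun w => a (↑w) (↑v))]
    refine le_trans (Finset.sum_le_sum fun w _ => ?_) (hclass v hv)
    split
    · have h2 := ha0 (↑v) (↑w); linarith
    · exact le_refl 0
  · -- out-affectance bound
    intro x hx
    rcases Finset.mem_image.1 hx with ⟨v, hv, rfl⟩
    have hsum : ∑ w ∈ (Cl j).image Subtype.val, a (↑v) w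
        = ∑ w ∈ Cl j, a (↑v) (↑w) :=
      Finset.sum_image fun x _ y _ h => Subtype.val_injective h
    rw [hsum]
    have h1 : ∑ w ∈ Cl j, a (↑v) (↑w) = a (↑v) (↑v) + ∑ w ∈ (Cl j).erase v, a (↑v) (↑w) :=
      (Finset.add_sum_erase _ _ hv).symm
    rw [h1, hdiag, zero_add, herase v hv (fun w => a (↑v) (↑w))]
    have hle : (∑ w ∈ Finset.univ.erase v, if c w = j then a (↑v) (↑w) else 0) ≤ 1 / K := by
      refine le_trans (Finset.sum_le_sum fun w _ => ?_) (hclass v hv)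
      split
      · have h2 := ha0 (↑w) (↑v); linarith
      · exact le_refl 0
    have h2K : (1:ℝ) / K ≤ 2 / K := by
      rw [div_le_div_iff₀ hK0 hK0]; linarith
    linarith
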